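/- Let Γ be a (c,t)-sparse graph with c ≤ 1/2, and let G ⊆ Γ be a bipartite subgraph with parts U, R. Fix u ∈ U with deg_G(u) ≥ D, let Y ⊆ N_G(u) be a k-tuple such that |N_G(Y) \ N⁺_Γ({u})| ≥ M with M ≥ c^{−(b−k)}·t, and sample b−k further vertices uniformly at random from N_G(u) \ Y. Then with probability at least 1 − (b−k)·t/(D − k), the sampled set X' satisfies |N_G(Y) \ N⁺_Γ({u} ∪ X')| ≥ c^{b−k}·M. -/

import Mathlib

open scoped Classical
open Finset SimpleGraph

/-- A graph is `(c,t)`-sparse if any two vertex subsets of size at least `t` have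
edge density (counting ordered pairs) at most `1 - c`. -/
def Sparse {V : Type*} [Fintype V] (Γ : SimpleGraph V) (c : ℝ) (t : ℕ) : Prop :=
  ∀ A B : Finset V, t ≤ A.card → t ≤ B.card →
    (((A ×ˢ B).filter fun p => Γ.Adj p.1 p.2).card : ℝ) ≤ (1 - c) * A.card * B.card

private lemma card_filter_prod {α β : Type*} (A : Finset α) (B : Finset β)
    (q : α → β → Prop) :
    ((A ×ˢ B).filter fun p => q p.1 p.2).card = ∑ a ∈ A, (B.filter (q a)).card := by
  classical
  rw [Finset.card_filter, Finset.sum_product]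
  refine Finset.sum_congr rfl fun a _ => ?_
  rw [Finset.card_filter]

private lemma card_filter_cons {α : Type*} [Fintype α] (n : ℕ)
    (P : (Fin (n+1) → α) → Prop) :
    (Finset.univ.filter P).card
      = ∑ s : α, (Finset.univ.filter fun g : Fin n → α => P (Fin.cons s g)).card := by
  classical
  have h1 : (Finset.univ.filter P).card
      = (Finset.univ.filter fun x : α × (Fin n → α) => P (Fin.cons x.1 x.2)).card := by
    rw [← Fintype.card_subtype, ← Fintype.card_subtype]
    exact Fintype.card_congr
      (((Fin.consEquiv fun _ => α).subtypeEquiv fun x => Iff.rfl).symm)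
  rw [h1, ← Finset.univ_product_univ]
  exact card_filter_prod Finset.univ Finset.univ (fun s g => P (Fin.cons s g))

private lemma key_lemma {V : Type*} [Fintype V] (Γ : SimpleGraph V) (c : ℝ) (t : ℕ)
    (hc : 0 < c) (hc1 : c ≤ 1) (hsp : Sparse Γ c t) (S : Finset V) :
    ∀ n : ℕ, ∀ W : Finset V, (c⁻¹ : ℝ) ^ n * t ≤ W.card →
      ((S.card : ℝ)) ^ n - n * t * ((S.card : ℝ)) ^ (n - 1) ≤
        ((Finset.univ.filter fun f : Fin n → {x // x ∈ S} =>
          c ^ n * (W.card : ℝ) ≤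
            ((W.filter fun w => ∀ i, ¬ Γ.Adj ((f i) : V) w).card : ℝ)).card : ℝ) := by
  intro n
  induction n with
  | zero =>
    intro W _
    have hfil : (Finset.univ.filter fun f : Fin 0 → {x // x ∈ S} =>
        c ^ 0 * (W.card : ℝ) ≤
          ((W.filter fun w => ∀ i, ¬ Γ.Adj ((f i) : V) w).card : ℝ)) = Finset.univ := by
      apply Finset.filter_true_of_mem
      intro f _
      have h2 : (W.filter fun w => ∀ i : Fin 0, ¬ Γ.Adj ((f i) : V) w) = W :=
        Finset.filter_true_of_mem (fun w _ i => i.elim0)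
      rw [h2, pow_zero, one_mul]
    rw [hfil]
    simp
  | succ n IH =>
    intro W hW
    simp only [Nat.add_sub_cancel]
    set σ := (S.card : ℝ) with hσdef
    have hcount0 : (0:ℝ) ≤ ((Finset.univ.filter fun f : Fin (n+1) → {x // x ∈ S} =>
        c ^ (n+1) * (W.card : ℝ) ≤
          ((W.filter fun w => ∀ i, ¬ Γ.Adj ((f i) : V) w).card : ℝ)).card : ℝ) :=
      Nat.cast_nonneg _
    have hσ0 : (0:ℝ) ≤ σ := Nat.cast_nonneg _
    by_cases htσ : (t : ℝ) ≤ σ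
    swap
    · -- degenerate case : σ < t
      push_neg at htσ
      have hp : (0:ℝ) ≤ σ ^ n := pow_nonneg hσ0 n
      have e1 : σ ^ (n+1) = σ ^ n * σ := pow_succ σ n
      have hnt : (0:ℝ) ≤ (n : ℝ) * t := by positivity
      have : σ ^ (n+1) - ((n+1 : ℕ) : ℝ) * t * σ ^ n ≤ 0 := by
        push_cast
        nlinarith [mul_le_mul_of_nonneg_left htσ.le hp]
      linarith
    -- main case
    have hinv : (1:ℝ) ≤ c⁻¹ := one_le_inv_iff₀.mpr ⟨hc, hc1⟩
    have hinv1 : (1:ℝ) ≤ c⁻¹ ^ (n+1) := one_le_pow₀ hinv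
    have htW : (t:ℝ) ≤ W.card :=
      le_trans (le_mul_of_one_le_left (Nat.cast_nonneg t) hinv1) hW
    have htWn : t ≤ W.card := by exact_mod_cast htW
    set Bad := S.filter (fun s => ((W.filter fun w => ¬ Γ.Adj s w).card : ℝ) < c * W.card)
      with hBaddef
    have hBadt : Bad.card ≤ t := by
      by_contra hcon
      push_neg at hcon
      have hBne : Bad.Nonempty := Finset.card_pos.mp (lt_of_le_of_lt (Nat.zero_le t) hcon)
      have hsp' := hsp Bad W hcon.le htWn
      have hprod : (((Bad ×ˢ W).filter fun p => Γ.Adj p.1 p.2).card : ℝ)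
          = ∑ s ∈ Bad, ((W.filter fun w => Γ.Adj s w).card : ℝ) := by
        rw [card_filter_prod]
        push_cast
        rfl
      have hlow : ∀ s ∈ Bad, (1 - c) * (W.card : ℝ)
          < ((W.filter fun w => Γ.Adj s w).card : ℝ) := by
        intro s hs
        have h2 := (Finset.mem_filter.mp hs).2
        have h3 : (W.filter fun w => Γ.Adj s w).card
            + (W.filter fun w => ¬ Γ.Adj s w).card = W.card :=
          Finset.card_filter_add_card_filter_not (fun w => Γ.Adj s w)
        have h4 : ((W.filter fun w => Γ.Adj s w).card : ℝ)
            + ((W.filter fun w => ¬ Γ.Adj s w).card : ℝ) = (W.card : ℝ) := by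
          exact_mod_cast h3
        nlinarith [h2, h4]
      have hsum := Finset.sum_lt_sum_of_nonempty hBne hlow
      rw [Finset.sum_const, nsmul_eq_mul] at hsum
      rw [hprod] at hsp'
      nlinarith [hsum, hsp']
    have hdec := card_filter_cons (α := {x // x ∈ S}) n
      (fun f => c ^ (n+1) * (W.card : ℝ) ≤
        ((W.filter fun w => ∀ i, ¬ Γ.Adj ((f i) : V) w).card : ℝ))
    set B : ℝ := σ ^ n - n * t * σ ^ (n - 1) with hBdef
    have hgood : ∀ s : {x // x ∈ S}, (s : V) ∉ Bad →
        B ≤ ((Finset.univ.filter fun g : Fin n → {x // x ∈ S} =>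
          c ^ (n+1) * (W.card : ℝ) ≤
            ((W.filter fun w => ∀ i, ¬ Γ.Adj ((Fin.cons (α := fun _ => ({x // x ∈ S})) s g i : {x // x ∈ S}) : V) w).card
              : ℝ)).card : ℝ) := by
      intro s hs
      have hsS : (s : V) ∈ S := s.2
      have hcW : c * (W.card : ℝ) ≤ ((W.filter fun w => ¬ Γ.Adj (s : V) w).card : ℝ) := by
        by_contra h
        push_neg at h
        exact hs (Finset.mem_filter.mpr ⟨hsS, h⟩)
      set W' := W.filter fun w => ¬ Γ.Adj (s : V) w with hW'def
      have hW'hyp : (c⁻¹ : ℝ) ^ n * t ≤ W'.card := by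
        have h1 : (c⁻¹ : ℝ) ^ n * t = c * ((c⁻¹) ^ (n+1) * t) := by
          rw [pow_succ, show c * (c⁻¹ ^ n * c⁻¹ * t) = c⁻¹ ^ n * t * (c * c⁻¹) by ring,
            mul_inv_cancel₀ hc.ne', mul_one]
        rw [h1]
        calc c * ((c⁻¹) ^ (n+1) * t) ≤ c * W.card := by
              exact mul_le_mul_of_nonneg_left hW hc.le
          _ ≤ W'.card := hcW
      have hIH := IH W' hW'hyp
      refine le_trans hIH ?_
      have hsub : (Finset.univ.filter fun g : Fin n → {x // x ∈ S} =>
          c ^ n * (W'.card : ℝ) ≤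
            ((W'.filter fun w => ∀ i, ¬ Γ.Adj ((g i) : V) w).card : ℝ))
          ⊆ (Finset.univ.filter fun g : Fin n → {x // x ∈ S} =>
          c ^ (n+1) * (W.card : ℝ) ≤
            ((W.filter fun w => ∀ i, ¬ Γ.Adj ((Fin.cons (α := fun _ => ({x // x ∈ S})) s g i : {x // x ∈ S}) : V) w).card
              : ℝ)) := by
        intro g hg
        simp only [Finset.mem_filter, Finset.mem_univ, true_and] at hg ⊢
        have hset : (W.filter fun w => ∀ i, ¬ Γ.Adj ((Fin.cons (α := fun _ => ({x // x ∈ S})) s g i : {x // x ∈ S}) : V) w)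
            = W'.filter fun w => ∀ i, ¬ Γ.Adj ((g i) : V) w := by
          rw [hW'def, Finset.filter_filter]
          apply Finset.filter_congr
          intro w _
          rw [Fin.forall_fin_succ]
          simp
        rw [hset]
        calc c ^ (n+1) * (W.card : ℝ) = c ^ n * (c * W.card) := by ring
          _ ≤ c ^ n * W'.card := mul_le_mul_of_nonneg_left hcW (pow_nonneg hc.le n)
          _ ≤ _ := hg
      exact_mod_cast Nat.cast_le.mpr (Finset.card_le_card hsub)
    set Good := Finset.univ.filter (fun s : {x // x ∈ S} => (s : V) ∉ Bad) with hGooddef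
    have hGoodcard : σ - t ≤ (Good.card : ℝ) := by
      have h1 : (Finset.univ.filter fun s : {x // x ∈ S} => (s : V) ∈ Bad).card ≤ Bad.card := by
        refine Finset.card_le_card_of_injOn Subtype.val ?_ ?_
        · intro s hs; exact (Finset.mem_filter.mp hs).2
        · intro a _ b _ hab; exact Subtype.ext hab
      have h2 := Finset.card_filter_add_card_filter_not
        (s := (Finset.univ : Finset {x // x ∈ S})) (p := fun s => (s : V) ∈ Bad)
      rw [Finset.card_univ, Fintype.card_coe] at h2
      have h2' : (Finset.univ.filter fun s : {x // x ∈ S} => (s : V) ∈ Bad).card + Good.card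
          = S.card := by
        rw [hGooddef]
        exact h2
      have h3 : S.card ≤ t + Good.card := by
        calc S.card = _ + Good.card := h2'.symm
          _ ≤ t + Good.card := Nat.add_le_add_right (le_trans h1 hBadt) _
      have h4 : (S.card : ℝ) ≤ (t : ℝ) + Good.card := by exact_mod_cast h3
      linarith
    have halg : σ ^ (n+1) - ((n+1 : ℕ) : ℝ) * t * σ ^ n ≤ (σ - t) * B := by
      rw [hBdef]
      rcases n with _ | m
      · push_cast
        simp
      · have hp : (0:ℝ) ≤ σ ^ m := pow_nonneg hσ0 m
        have hq : (0:ℝ) ≤ ((m:ℝ)+1) * t * t * σ ^ m := by positivity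
        simp only [Nat.add_sub_cancel]
        push_cast
        rw [show σ ^ (m+1+1) = σ ^ m * σ * σ by rw [pow_succ, pow_succ],
          show σ ^ (m+1) = σ ^ m * σ from pow_succ σ m]
        nlinarith [hp, hq, htσ]
    have hstep : (σ - t) * B ≤ ∑ s : {x // x ∈ S},
        (((Finset.univ.filter fun g : Fin n → {x // x ∈ S} =>
          c ^ (n+1) * (W.card : ℝ) ≤
            ((W.filter fun w => ∀ i, ¬ Γ.Adj ((Fin.cons (α := fun _ => ({x // x ∈ S})) s g i : {x // x ∈ S}) : V) w).card
              : ℝ)).card : ℕ) : ℝ) := by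
      have hsum0 : ∀ s ∈ Good, B ≤ (((Finset.univ.filter fun g : Fin n → {x // x ∈ S} =>
          c ^ (n+1) * (W.card : ℝ) ≤
            ((W.filter fun w => ∀ i, ¬ Γ.Adj ((Fin.cons (α := fun _ => ({x // x ∈ S})) s g i : {x // x ∈ S}) : V) w).card
              : ℝ)).card : ℕ) : ℝ) := by
        intro s hs
        exact hgood s (Finset.mem_filter.mp hs).2
      have hsub : ∑ s ∈ Good, (((Finset.univ.filter fun g : Fin n → {x // x ∈ S} =>
          c ^ (n+1) * (W.card : ℝ) ≤
            ((W.filter fun w => ∀ i, ¬ Γ.Adj ((Fin.cons (α := fun _ => ({x // x ∈ S})) s g i : {x // x ∈ S}) : V) w).card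
              : ℝ)).card : ℕ) : ℝ)
          ≤ ∑ s : {x // x ∈ S}, (((Finset.univ.filter fun g : Fin n → {x // x ∈ S} =>
          c ^ (n+1) * (W.card : ℝ) ≤
            ((W.filter fun w => ∀ i, ¬ Γ.Adj ((Fin.cons (α := fun _ => ({x // x ∈ S})) s g i : {x // x ∈ S}) : V) w).card
              : ℝ)).card : ℕ) : ℝ) :=
        Finset.sum_le_sum_of_subset_of_nonneg (Finset.subset_univ _)
          (fun _ _ _ => Nat.cast_nonneg _)
      by_cases hB : 0 ≤ B
      · calc (σ - t) * B ≤ (Good.card : ℝ) * B := mul_le_mul_of_nonneg_right hGoodcard hB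
          _ ≤ ∑ s ∈ Good, _ := by
              rw [← nsmul_eq_mul]
              exact Finset.card_nsmul_le_sum Good _ B hsum0
          _ ≤ _ := hsub
      · push_neg at hB
        have h1 : (σ - t) * B ≤ 0 :=
          mul_nonpos_of_nonneg_of_nonpos (by linarith) hB.le
        have h2 : (0:ℝ) ≤ ∑ s : {x // x ∈ S},
            (((Finset.univ.filter fun g : Fin n → {x // x ∈ S} =>
            c ^ (n+1) * (W.card : ℝ) ≤
              ((W.filter fun w => ∀ i, ¬ Γ.Adj ((Fin.cons (α := fun _ => ({x // x ∈ S})) s g i : {x // x ∈ S}) : V) w).card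
                : ℝ)).card : ℕ) : ℝ) :=
          Finset.sum_nonneg (fun _ _ => Nat.cast_nonneg _)
        linarith
    rw [hdec]
    rw [Nat.cast_sum]
    calc σ ^ (n+1) - ((n+1 : ℕ) : ℝ) * t * σ ^ n ≤ (σ - t) * B := halg
      _ ≤ _ := hstep

private lemma final_arith (m t : ℕ) (σ d Cnt : ℝ) (hd : 0 < d) (hdσ : d ≤ σ)
    (hC : σ ^ m - m * t * σ ^ (m-1) ≤ Cnt) :
    1 - (m : ℝ) * t / d ≤ Cnt / σ ^ m := by
  have hσ : 0 < σ := lt_of_lt_of_le hd hdσ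
  rw [le_div_iff₀ (pow_pos hσ m)]
  rcases m with _ | j
  · simpa using hC
  · have e1 : σ ^ (j+1) = σ ^ j * σ := pow_succ σ j
    have hp : (0:ℝ) ≤ σ ^ j := pow_nonneg hσ.le j
    simp only [Nat.add_sub_cancel] at hC
    push_cast at hC ⊢
    have hX : (0:ℝ) ≤ ((j:ℝ)+1) * t * σ ^ j := by positivity
    have key2 : ((j:ℝ)+1) * t * σ ^ j ≤ ((j:ℝ)+1) * t / d * σ ^ (j+1) := by
      rw [e1, div_mul_eq_mul_div, le_div_iff₀ hd]
      nlinarith [hX, hdσ]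
    have expand : (1 - ((j:ℝ)+1) * t / d) * σ ^ (j+1)
        = σ ^ (j+1) - ((j:ℝ)+1) * t / d * σ ^ (j+1) := by ring
    rw [expand]
    linarith

theorem stmt_16 {V : Type*} [Fintype V] (Γ G : SimpleGraph V) (c M : ℝ) (t k b D : ℕ)
    (hc : 0 < c) (hc' : c ≤ 1/2) (hsparse : Sparse Γ c t) (hGΓ : G ≤ Γ)
    (U R : Finset V)
    (hbip : ∀ x y : V, G.Adj x y → (x ∈ U ∧ y ∈ R) ∨ (x ∈ R ∧ y ∈ U))
    (u : V) (hu : u ∈ U) (hD : D ≤ G.degree u) (hkb : k ≤ b) (hkD : k < D)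
    (Y : Finset V) (hY : Y ⊆ G.neighborFinset u) (hYcard : Y.card = k)
    (hM : (c⁻¹ : ℝ) ^ (b - k) * t ≤ M)
    (hW : M ≤ ((((Finset.univ.filter fun z => ∀ y ∈ Y, G.Adj y z) \
        Γ.neighborFinset u)).card : ℝ)) :
    1 - (b - k : ℕ) * (t : ℝ) / ((D : ℝ) - (k : ℝ)) ≤
      ((Finset.univ.filter fun f : Fin (b - k) → {x // x ∈ G.neighborFinset u \ Y} =>
          c ^ (b - k) * M ≤
            (((((Finset.univ.filter fun z => ∀ y ∈ Y, G.Adj y z) \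
              Γ.neighborFinset u)).filter fun w => ∀ i, ¬ Γ.Adj ((f i) : V) w).card : ℝ)).card : ℝ)
        / ((G.neighborFinset u \ Y).card : ℝ) ^ (b - k) := by
  classical
  set S : Finset V := G.neighborFinset u \ Y with hSdef
  set W₀ : Finset V := (Finset.univ.filter fun z => ∀ y ∈ Y, G.Adj y z) \ Γ.neighborFinset u
    with hW₀def
  have hc1 : c ≤ 1 := by linarith
  have hkdeg : k ≤ G.degree u := by
    rw [← hYcard]
    calc Y.card ≤ (G.neighborFinset u).card := Finset.card_le_card hY
      _ = G.degree u := G.card_neighborFinset_eq_degree u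
  have hScard : S.card = G.degree u - k := by
    rw [hSdef, Finset.card_sdiff_of_subset hY, hYcard, G.card_neighborFinset_eq_degree u]
  have hσD : ((D:ℝ) - (k:ℝ)) ≤ (S.card : ℝ) := by
    rw [hScard]
    rw [Nat.cast_sub hkdeg]
    have : (D:ℝ) ≤ (G.degree u : ℝ) := Nat.cast_le.mpr hD
    linarith
  have hdk : (0:ℝ) < (D:ℝ) - (k:ℝ) := by
    have : (k:ℝ) < (D:ℝ) := Nat.cast_lt.mpr hkD
    linarith
  have hW₀hyp : (c⁻¹ : ℝ) ^ (b - k) * t ≤ W₀.card := le_trans hM hW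
  have hkey := key_lemma Γ c t hc hc1 hsparse S (b - k) W₀ hW₀hyp
  have hmono : (Finset.univ.filter fun f : Fin (b - k) → {x // x ∈ S} =>
      c ^ (b - k) * (W₀.card : ℝ) ≤
        ((W₀.filter fun w => ∀ i, ¬ Γ.Adj ((f i) : V) w).card : ℝ)).card
      ≤ (Finset.univ.filter fun f : Fin (b - k) → {x // x ∈ S} =>
      c ^ (b - k) * M ≤
        ((W₀.filter fun w => ∀ i, ¬ Γ.Adj ((f i) : V) w).card : ℝ)).card := by
    apply Finset.card_le_card
    intro f hf
    simp only [Finset.mem_filter, Finset.mem_univ, true_and] at hf ⊢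
    exact le_trans (mul_le_mul_of_nonneg_left hW (pow_nonneg hc.le (b - k))) hf
  have hC : (S.card : ℝ) ^ (b - k) - (b - k : ℕ) * t * (S.card : ℝ) ^ (b - k - 1)
      ≤ ((Finset.univ.filter fun f : Fin (b - k) → {x // x ∈ S} =>
      c ^ (b - k) * M ≤
        ((W₀.filter fun w => ∀ i, ¬ Γ.Adj ((f i) : V) w).card : ℝ)).card : ℝ) :=
    le_trans hkey (Nat.cast_le.mpr hmono)
  exact final_arith (b - k) t (S.card : ℝ) ((D:ℝ) - (k:ℝ)) _ hdk hσD hC
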